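/- Let A₀ ∈ t be a regular diagonal matrix and k ≥ 2. Define, for a nonzero complex direction d on an anti-Stokes ray, the set of roots supporting d: roots β = e_i − e_j with β(A₀)/z^{k−1} ∈ ℝ₊ for z on d. If a₁, …, a_l are l consecutive anti-Stokes directions spanning an open half-period sector of angle π/(k−1), then the union R₊ of the roots supporting a₁, …, a_l is a system of positive roots: for every root β, exactly one of β, −β belongs to R₊. -/

import Mathlib

open Complex

/-- The set `R₊` of roots `β_{ij}(X) = x_i − x_j` of `gl(n, ℂ)` supporting some
anti-Stokes direction in the half-open arc `[φ₀, φ₀ + π/(k−1))` of directions: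
`(i, j) ∈ R₊` iff `i ≠ j` and `(a_i − a_j)/z^{k−1} ∈ ℝ₊` for some direction
`z = e^{iφ}` with `φ₀ ≤ φ < φ₀ + π/(k−1)`. -/
def supportedRoots {n : ℕ} (a : Fin n → ℂ) (k : ℕ) (φ₀ : ℝ) :
    Set (Fin n × Fin n) :=
  {p | p.1 ≠ p.2 ∧ ∃ φ : ℝ, φ₀ ≤ φ ∧ φ < φ₀ + Real.pi / (k - 1) ∧
    ∃ r : ℝ, 0 < r ∧
      a p.1 - a p.2 = (r : ℂ) * (Complex.exp (φ * Complex.I)) ^ (k - 1)}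

/-- The supporting condition (in the angle `ψ = (k−1)φ`) holds iff the
representative of `θ` modulo `2π` in `[ψ₀, ψ₀ + 2π)` lies in `[ψ₀, ψ₀ + π)`. -/
lemma cond_iff_toIcoMod (c : ℂ) (θ ψ₀ : ℝ)
    (hθ : c = (‖c‖ : ℂ) * Complex.exp (θ * Complex.I)) (hc : c ≠ 0) :
    (∃ ψ : ℝ, ψ₀ ≤ ψ ∧ ψ < ψ₀ + Real.pi ∧ ∃ r : ℝ, 0 < r ∧
        c = (r : ℂ) * Complex.exp (ψ * Complex.I)) ↔
      toIcoMod Real.two_pi_pos ψ₀ θ < ψ₀ + Real.pi := by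
  have habs : (0:ℝ) < ‖c‖ := by
    simpa [norm_pos_iff] using hc
  constructor
  · rintro ⟨ψ, h1, h2, r, hr, heq⟩
    have hrabs : ‖c‖ = r := by
      have := congrArg (‖·‖) heq
      simpa [Complex.norm_exp_ofReal_mul_I, abs_of_pos hr] using this
    have hexp : Complex.exp (ψ * Complex.I) = Complex.exp (θ * Complex.I) := by
      have h := hθ.symm.trans heq
      rw [hrabs] at h
      exact (mul_left_cancel₀ (by exact_mod_cast hr.ne') h.symm)
    obtain ⟨m, hm⟩ := Complex.exp_eq_exp_iff_exists_int.mp hexp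
    have hψθ : ψ = θ + m * (2 * Real.pi) := by
      have hI : (ψ : ℂ) * Complex.I = (((θ : ℝ) + (m : ℝ) * (2 * Real.pi)) : ℂ) * Complex.I := by
        push_cast at hm ⊢; linear_combination hm
      have := mul_right_cancel₀ Complex.I_ne_zero hI
      exact_mod_cast this
    have heqmod : toIcoMod Real.two_pi_pos ψ₀ θ = ψ := by
      rw [toIcoMod_eq_iff]
      refine ⟨⟨h1, by linarith [Real.pi_pos]⟩, ⟨-m, ?_⟩⟩
      rw [zsmul_eq_mul]
      push_cast
      linarith [hψθ]
    linarith [heqmod.le]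
  · intro h
    set ψ := toIcoMod Real.two_pi_pos ψ₀ θ with hψ
    obtain ⟨hmem, m, hm⟩ := (toIcoMod_eq_iff Real.two_pi_pos).mp hψ.symm
    refine ⟨ψ, hmem.1, h, ‖c‖, habs, ?_⟩
    have hexp : Complex.exp (θ * Complex.I) = Complex.exp (ψ * Complex.I) := by
      rw [Complex.exp_eq_exp_iff_exists_int]
      refine ⟨m, ?_⟩
      rw [zsmul_eq_mul] at hm

      rw [hm]; push_cast; ring
    rw [← hexp]; exact hθ

/-- Substituting `ψ = Kφ` in the supporting condition. -/
lemma cond_subst (c : ℂ) (K : ℕ) (hKpos : (0:ℝ) < (K : ℝ)) (φ₀ : ℝ) :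
    (∃ φ : ℝ, φ₀ ≤ φ ∧ φ < φ₀ + Real.pi / (K : ℝ) ∧ ∃ r : ℝ, 0 < r ∧
        c = (r : ℂ) * (Complex.exp (φ * Complex.I)) ^ K) ↔
      (∃ ψ : ℝ, (K : ℝ) * φ₀ ≤ ψ ∧ ψ < (K : ℝ) * φ₀ + Real.pi ∧ ∃ r : ℝ, 0 < r ∧
        c = (r : ℂ) * Complex.exp (ψ * Complex.I)) := by
  have hpow : ∀ φ : ℝ, (Complex.exp (φ * Complex.I)) ^ K
      = Complex.exp ((((K : ℝ) * φ : ℝ)) * Complex.I) := by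
    intro φ
    rw [← Complex.exp_nat_mul]
    push_cast
    ring_nf
  constructor
  · rintro ⟨φ, h1, h2, r, hr, heq⟩
    refine ⟨(K : ℝ) * φ, ?_, ?_, r, hr, by rw [heq, hpow]⟩
    · nlinarith
    · nlinarith [mul_lt_mul_of_pos_left h2 hKpos, mul_div_cancel₀ Real.pi hKpos.ne']
  · rintro ⟨ψ, h1, h2, r, hr, heq⟩
    refine ⟨ψ / (K : ℝ), ?_, ?_, r, hr, ?_⟩
    · rw [le_div_iff₀ hKpos]; nlinarith
    · rw [div_lt_iff₀ hKpos]
      have hfe : (φ₀ + Real.pi / (K : ℝ)) * (K : ℝ) = (K : ℝ) * φ₀ + Real.pi := by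
        field_simp
      linarith [hfe, h2]
    · rw [heq, hpow, mul_div_cancel₀ _ hKpos.ne']

/-- Let `A₀ = diag(a)` be regular (`a` injective) and `k ≥ 2`.  The roots
supporting the anti-Stokes directions lying in a half-period arc of angle
`π/(k−1)` form a system of positive roots: for every root `β` of `gl(n, ℂ)`,
exactly one of `β`, `−β` belongs to `R₊`.  (Rotation by `π/(k−1)` changes the
sign of `z^{k−1}`, exchanging the roots supporting a direction with their
negatives.) -/
theorem supportedRoots_positive_system {n k : ℕ} (hk : 2 ≤ k)
    (a : Fin n → ℂ) (ha : Function.Injective a) (φ₀ : ℝ) :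
    ∀ i j : Fin n, i ≠ j →
      ((i, j) ∈ supportedRoots a k φ₀ ↔ (j, i) ∉ supportedRoots a k φ₀) := by
  intro i j hij
  set K : ℕ := k - 1 with hK
  have hKpos : (0:ℝ) < (K : ℝ) := by
    have : 1 ≤ K := by omega
    exact_mod_cast Nat.lt_of_lt_of_le Nat.zero_lt_one this
  have hKcast : ((k:ℝ) - 1) = (K : ℝ) := by
    rw [hK, Nat.cast_sub (by omega)]; norm_num
  set c : ℂ := a i - a j with hc
  have hcne : c ≠ 0 := sub_ne_zero.mpr fun h => hij (ha h)
  have hcne' : -c ≠ 0 := neg_ne_zero.mpr hcne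
  set ψ₀ : ℝ := (K : ℝ) * φ₀ with hψ₀
  -- rewrite both memberships via the key lemmas
  have hmem1 : (i, j) ∈ supportedRoots a k φ₀ ↔
      toIcoMod Real.two_pi_pos ψ₀ (Complex.arg c) < ψ₀ + Real.pi := by
    rw [supportedRoots, Set.mem_setOf_eq]
    simp only [← hc, hKcast]
    rw [and_iff_right hij, cond_subst c K hKpos φ₀, ← hψ₀,
      cond_iff_toIcoMod c (Complex.arg c) ψ₀ (Complex.norm_mul_exp_arg_mul_I c).symm hcne]
  have hmem2 : (j, i) ∈ supportedRoots a k φ₀ ↔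
      toIcoMod Real.two_pi_pos ψ₀ (Complex.arg c + Real.pi) < ψ₀ + Real.pi := by
    rw [supportedRoots, Set.mem_setOf_eq]
    have hji : a j - a i = -c := by rw [hc]; ring
    simp only [hji, hKcast]
    have hθ' : -c = (‖-c‖ : ℂ) * Complex.exp (((Complex.arg c + Real.pi) : ℝ) * Complex.I) := by
      rw [norm_neg]
      push_cast
      rw [add_mul, Complex.exp_add, Complex.exp_pi_mul_I]
      linear_combination Complex.norm_mul_exp_arg_mul_I (a i - a j)
    rw [and_iff_right hij.symm, cond_subst (-c) K hKpos φ₀, ← hψ₀,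
      cond_iff_toIcoMod (-c) (Complex.arg c + Real.pi) ψ₀ hθ' hcne']
  rw [hmem1, hmem2]
  -- now the combinatorics of representatives mod 2π
  set u := toIcoMod Real.two_pi_pos ψ₀ (Complex.arg c) with hu
  set v := toIcoMod Real.two_pi_pos ψ₀ (Complex.arg c + Real.pi) with hv
  obtain ⟨humem, m₁, hm₁⟩ := (toIcoMod_eq_iff Real.two_pi_pos).mp hu.symm
  obtain ⟨hvmem, m₂, hm₂⟩ := (toIcoMod_eq_iff Real.two_pi_pos).mp hv.symm
  rw [zsmul_eq_mul] at hm₁ hm₂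
  have hrel : v = u + Real.pi + ((m₁ - m₂ : ℤ) : ℝ) * (2 * Real.pi) := by
    push_cast
    linarith [hm₁, hm₂]
  set z : ℤ := m₁ - m₂ with hz
  have hu1 : ψ₀ ≤ u := humem.1
  have hu2 : u < ψ₀ + 2 * Real.pi := humem.2
  have hv1 : ψ₀ ≤ v := hvmem.1
  have hv2 : v < ψ₀ + 2 * Real.pi := hvmem.2
  have hpi := Real.pi_pos
  have hzb1 : (2 * z : ℝ) * Real.pi < 1 * Real.pi := by nlinarith [hrel]
  have hzb2 : (-3 : ℝ) * Real.pi < (2 * z : ℝ) * Real.pi := by nlinarith [hrel]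
  have hz1 : (2 * z : ℝ) < 1 := (mul_lt_mul_iff_of_pos_right hpi).mp hzb1
  have hz2 : (-3 : ℝ) < (2 * z : ℝ) := (mul_lt_mul_iff_of_pos_right hpi).mp hzb2
  have hz1' : 2 * z < 1 := by exact_mod_cast hz1
  have hz2' : -3 < 2 * z := by exact_mod_cast hz2
  have : z = 0 ∨ z = -1 := by omega
  rcases this with h0 | h1
  · rw [h0] at hrel
    push_cast at hrel
    constructor
    · intro _; linarith
    · intro hnv; by_contra hnu; push_neg at hnu; linarith
  · rw [h1] at hrel
    push_cast at hrel
    constructor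
    · intro h; linarith
    · intro hnv; push_neg at hnv; linarith
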